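/- With p(l,k) as defined by the Buckley–Osthus loop recurrence (parameter a > 0, initial value p(2,0) = P), there exists a constant C such that p(l,k) ≤ C·k/l³ for all l ≥ 2 and k ≥ 1. -/

import Mathlib

open Real

set_option maxHeartbeats 1000000 in
theorem plk_cubic_decay (a P : ℝ) (ha : 0 < a) (hP : 0 < P) (p : ℕ → ℕ → ℝ)
    (h20 : p 2 0 = P)
    (h2k : ∀ k : ℕ, 1 ≤ k → p 2 k = 0)
    (hsmall : ∀ l k : ℕ, l ≤ 1 → p l k = 0)
    (hl0 : ∀ l : ℕ, 3 ≤ l →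
      p l 0 = p (l - 1) 0 * (((l : ℝ) - 2 + a) / ((l : ℝ) * (1 + a) - 2 - a)))
    (hlk : ∀ l k : ℕ, 3 ≤ l → 1 ≤ k →
      p l k = p l (k - 1) *
          ((a * (l : ℝ) + (k : ℝ) - 2 * a - 1) / ((l : ℝ) * (1 + a) + (k : ℝ) - 1 - a)) +
        p (l - 1) k *
          (((l : ℝ) - 2 + a) / ((l : ℝ) * (1 + a) + (k : ℝ) - 1 - a))) :
    ∃ C : ℝ, ∀ l k : ℕ, 2 ≤ l → 1 ≤ k → p l k ≤ C * (k : ℝ) / (l : ℝ) ^ 3 := by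
  have hainv : (0:ℝ) < a⁻¹ := inv_pos.mpr ha
  have hai : a * a⁻¹ = 1 := mul_inv_cancel₀ ha.ne'
  set d : ℝ := 2 * (a + a⁻¹) with hddef
  have hd0 : (0:ℝ) < d := by positivity
  set b : ℝ := a + 1 + d with hbdef
  have hb2 : (2:ℝ) < b := by
    rw [hbdef, hddef]
    nlinarith [sq_nonneg (6*a - 1), hai, ha]
  set r : ℝ := (1 + a) / (1 + 2*a) with hrdef
  have hr0 : (0:ℝ) < r := by rw [hrdef]; positivity
  have hr1 : r < 1 := by
    rw [hrdef, div_lt_one (by linarith)]; linarith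
  -- bound on p(l,0)
  have hp0 : ∀ l : ℕ, 2 ≤ l → 0 ≤ p l 0 ∧ p l 0 ≤ P * r ^ (l - 2) := by
    intro l hl
    induction l, hl using Nat.le_induction with
    | base =>
      rw [h20]
      norm_num
      exact hP.le
    | succ n hn ih =>
      have h3 : 3 ≤ n + 1 := by omega
      have hrec := hl0 (n+1) h3
      rw [Nat.add_sub_cancel] at hrec
      push_cast at hrec
      have hM : (2:ℝ) ≤ (n:ℝ) := by exact_mod_cast hn
      have hden : (0:ℝ) < ((n:ℝ)+1) * (1+a) - 2 - a := by nlinarith [mul_nonneg ha.le (show (0:ℝ) ≤ (n:ℝ) by linarith)]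
      have hnum : (0:ℝ) ≤ (n:ℝ)+1-2+a := by linarith
      have hfr0 : 0 ≤ ((n:ℝ)+1-2+a) / (((n:ℝ)+1)*(1+a)-2-a) := div_nonneg hnum hden.le
      have hfr : ((n:ℝ)+1-2+a) / (((n:ℝ)+1)*(1+a)-2-a) ≤ r := by
        rw [hrdef, div_le_div_iff₀ hden (by linarith)]
        nlinarith [mul_nonneg (sq_nonneg a) (show (0:ℝ) ≤ (n:ℝ) - 2 by linarith)]
      constructor
      · rw [hrec]; exact mul_nonneg ih.1 hfr0
      · rw [hrec, show n + 1 - 2 = (n-2) + 1 from by omega, pow_succ, ← mul_assoc]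
        exact mul_le_mul ih.2 hfr hfr0 (by positivity)
  -- key polynomial inequality
  have keyK : ∀ L : ℝ, 3 ≤ L →
      (L-3+b) * (a*(L-2)+1) ≤ 3*(3*d + (L-3+b)*(a*(L-2)-1)) := by
    intro L hL
    have hx : (0:ℝ) < L - 3 + b := by linarith
    rcases le_or_gt 2 (a*(L-2)) with h | h
    · linarith [mul_nonneg hx.le (show (0:ℝ) ≤ a*(L-2) - 2 by linarith), hd0,
        mul_nonneg hx.le (mul_nonneg ha.le (show (0:ℝ) ≤ L-2 by linarith))]
    · have hm0 : (0:ℝ) ≤ a*(L-2) := mul_nonneg ha.le (by linarith)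
      have hL2 : L - 2 ≤ 2 * a⁻¹ := by
        have h2 := mul_le_mul_of_nonneg_left h.le hainv.le
        calc L - 2 = a⁻¹ * (a*(L-2)) := by rw [← mul_assoc, mul_comm a⁻¹ a, hai, one_mul]
          _ ≤ a⁻¹ * 2 := h2
          _ = 2 * a⁻¹ := by ring
      have hx2 : L - 3 + b ≤ 2*d := by
        rw [hbdef, hddef] at *
        linarith
      linarith [mul_le_mul hx2 (show 4 - 2*(a*(L-2)) ≤ 4 by linarith)
        (by linarith) (by linarith), hd0]
  -- transfer inequality for the k ≥ 2 step (C-free)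
  have keyMain : ∀ M K : ℝ, 2 ≤ M → 1 ≤ K →
      (K-1)*((a*(M+1)+K-2*a-1)*(M-2+b)) + K*((M-1+a)*(M+1+b))
        ≤ K*(((M+1)*(1+a)+K-1-a)*(M-2+b)) := by
    intro M K hM hK
    have hw0 : (0:ℝ) ≤ M - 2 + b := by linarith
    have hm : (0:ℝ) ≤ a*(M-1) := mul_nonneg ha.le (by linarith)
    have hkk := keyK (M+1) (by linarith)
    have h1 : (0:ℝ) ≤ (K-1)*d := mul_nonneg (by linarith) hd0.le
    nlinarith [mul_nonneg hw0 hm, hkk, h1, hw0]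

  -- get the constant C
  obtain ⟨Mb, hMb⟩ : ∃ Mb : ℝ, ∀ n : ℕ, (n:ℝ)^3 * r^n ≤ Mb := by
    have ht := tendsto_pow_const_mul_const_pow_of_lt_one 3 hr0.le hr1
    obtain ⟨Mb, hMb⟩ := ht.bddAbove_range
    exact ⟨Mb, fun n => hMb (Set.mem_range_self n)⟩
  have hMb0 : (0:ℝ) ≤ Mb := le_trans (by norm_num) (hMb 0)
  set C : ℝ := 3*P*(2+b)^3/r * Mb + 3*P*(2+b)^3/r + 1 with hCdef
  have hC0 : (0:ℝ) < C := by
    have hX : (0:ℝ) < 3*P*(2+b)^3/r := by positivity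
    have : (0:ℝ) ≤ 3*P*(2+b)^3/r * Mb := mul_nonneg hX.le hMb0
    rw [hCdef]
    linarith
  have hC : ∀ l : ℕ, 2 ≤ l →
      3*P*r^(l-2)*(((l:ℝ)-2+b)*((l:ℝ)-1+b)*((l:ℝ)+b)) ≤ C := by
    intro l hl
    obtain ⟨n, rfl⟩ : ∃ n, l = n + 2 := ⟨l - 2, by omega⟩
    rw [Nat.add_sub_cancel]
    push_cast
    have h1 : ((n:ℝ)+2-2+b) * ((n:ℝ)+2-1+b) * ((n:ℝ)+2+b) ≤ ((n:ℝ)+2+b)^3 := by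
      have f0 : (0:ℝ) ≤ (n:ℝ) := Nat.cast_nonneg n
      nlinarith [f0, hb2]
    have h2 : ((n:ℝ)+2+b)^3 ≤ (2+b)^3 * ((n:ℝ)+1)^3 := by
      have f0 : (0:ℝ) ≤ (n:ℝ) := Nat.cast_nonneg n
      have key : (n:ℝ)+2+b ≤ (2+b)*((n:ℝ)+1) := by nlinarith
      have h1' : (0:ℝ) ≤ (n:ℝ)+2+b := by linarith
      calc ((n:ℝ)+2+b)^3 ≤ ((2+b)*((n:ℝ)+1))^3 := by
            exact pow_le_pow_left₀ h1' key 3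
        _ = (2+b)^3 * ((n:ℝ)+1)^3 := by ring
    have h3 : ((n:ℝ)+1)^3 * r^(n+1) ≤ Mb := by
      have := hMb (n+1)
      push_cast at this
      exact this
    have hrn : (0:ℝ) ≤ r^n := by positivity
    have h4 : 3*P*r^n*(((n:ℝ)+2-2+b)*((n:ℝ)+2-1+b)*((n:ℝ)+2+b))
        ≤ 3*P*r^n*((2+b)^3 * ((n:ℝ)+1)^3) := by
      apply mul_le_mul_of_nonneg_left (le_trans h1 h2) (by positivity)
    have h5 : 3*P*r^n*((2+b)^3 * ((n:ℝ)+1)^3)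
        = 3*P*(2+b)^3/r * (((n:ℝ)+1)^3 * r^(n+1)) := by
      rw [pow_succ]
      field_simp
      ring
    calc 3*P*r^n*(((n:ℝ)+2-2+b)*((n:ℝ)+2-1+b)*((n:ℝ)+2+b))
        ≤ 3*P*r^n*((2+b)^3 * ((n:ℝ)+1)^3) := h4
      _ = 3*P*(2+b)^3/r * (((n:ℝ)+1)^3 * r^(n+1)) := h5
      _ ≤ 3*P*(2+b)^3/r * Mb := by
          apply mul_le_mul_of_nonneg_left h3 (by positivity)
      _ ≤ C := by
          rw [hCdef]
          have hX : (0:ℝ) < 3*P*(2+b)^3/r := by positivity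
          linarith
  -- transfer inequality for the k = 1 step (with C)
  have keyMain1 : ∀ M u : ℝ, 2 ≤ M → 0 ≤ u →
      3*u*((M-1+b)*(M+b)*(M+1+b)) ≤ C →
      u*((M-1+b)*(M+b)*(M+1+b))*((a*(M+1)+1-2*a-1)*(M-2+b)) + C*((M-1+a)*(M+1+b))
        ≤ C*(((M+1)*(1+a)+1-1-a)*(M-2+b)) := by
    intro M u hM hu h1
    have hw0 : (0:ℝ) < M - 2 + b := by linarith
    have hm : (0:ℝ) ≤ a*(M-1) := mul_nonneg ha.le (by linarith)
    have hQ4 : (0:ℝ) ≤ (M-1+b)*(M+b)*(M+1+b) :=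
      mul_nonneg (mul_nonneg (by linarith) (by linarith)) (by linarith)
    have hkk := keyK (M+1) (by linarith)
    have hS1 : (0:ℝ) ≤ 3*d + (M-2+b)*(a*(M-1)-1) := by
      nlinarith [mul_nonneg hw0.le hm, hkk, hw0]
    have huQ : (0:ℝ) ≤ u * ((M-1+b)*(M+b)*(M+1+b)) := mul_nonneg hu hQ4
    nlinarith [mul_le_mul_of_nonneg_right h1 hS1,
      mul_le_mul_of_nonneg_left hkk huQ,
      mul_nonneg huQ hw0.le]
  have hdiv : ∀ D : ℝ, D ≠ 0 → ∀ x y A B Q w : ℝ,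
      (x*(A/D)+y*(B/D))*Q*(D*w) = x*(A*(Q*w)) + y*(B*(Q*w)) := by
    intro D hD x y A B Q w
    field_simp
  -- main induction
  have main : ∀ l : ℕ, 2 ≤ l → ∀ k : ℕ, 1 ≤ k →
      0 ≤ p l k ∧ p l k * (((l:ℝ)-2+b)*((l:ℝ)-1+b)*((l:ℝ)+b)) ≤ C * (k:ℝ) := by
    intro l hl
    induction l, hl using Nat.le_induction with
    | base =>
      intro k hk
      rw [h2k k hk]
      constructor
      · exact le_rfl
      · rw [zero_mul]
        positivity
    | succ n hn ihn =>
      intro k hk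
      induction k, hk using Nat.le_induction with
      | base =>
        -- k = 1
        have h3 : 3 ≤ n + 1 := by omega
        have hrec := hlk (n+1) 1 h3 le_rfl
        simp only [Nat.sub_self] at hrec
        push_cast at hrec
        have hM : (2:ℝ) ≤ (n:ℝ) := by exact_mod_cast hn
        have hna : (0:ℝ) ≤ a*(n:ℝ) := mul_nonneg ha.le (by linarith)
        have hD : (0:ℝ) < ((n:ℝ)+1)*(1+a)+1-1-a := by nlinarith
        have hA0 : (0:ℝ) ≤ a*((n:ℝ)+1)+1-2*a-1 := by nlinarith
        have hB0 : (0:ℝ) ≤ (n:ℝ)+1-2+a := by linarith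
        have hpa := hp0 (n+1) (by omega)
        rw [show n + 1 - 2 = n - 1 from by omega] at hpa
        have hpb := ihn 1 le_rfl
        push_cast at hpb
        have hw0 : (0:ℝ) < (n:ℝ) - 2 + b := by linarith
        have hv0 : (0:ℝ) < (n:ℝ) + 1 + b := by linarith
        have hQ4 : (0:ℝ) < ((n:ℝ)-1+b)*((n:ℝ)+b)*((n:ℝ)+1+b) := by
          apply mul_pos (mul_pos (by linarith) (by linarith)) hv0
        have hCl : 3*(P*r^(n-1))*(((n:ℝ)-1+b)*((n:ℝ)+b)*((n:ℝ)+1+b)) ≤ C := by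
          have := hC (n+1) (by omega)
          rw [show n + 1 - 2 = n - 1 from by omega] at this
          push_cast at this
          linarith [this]
        have hkm := keyMain1 (n:ℝ) (P*r^(n-1)) hM (by positivity) hCl
        constructor
        · rw [hrec]
          exact add_nonneg (mul_nonneg hpa.1 (div_nonneg hA0 hD.le))
            (mul_nonneg hpb.1 (div_nonneg hB0 hD.le))
        · push_cast
          refine le_of_mul_le_mul_right ?_ (mul_pos hD hw0)
          have e1 : p (n+1) 1 * (((n:ℝ)+1-2+b)*((n:ℝ)+1-1+b)*((n:ℝ)+1+b))
              * ((((n:ℝ)+1)*(1+a)+1-1-a) * ((n:ℝ)-2+b))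
              = (p (n+1) 0 * (((n:ℝ)-1+b)*((n:ℝ)+b)*((n:ℝ)+1+b)))
                  * ((a*((n:ℝ)+1)+1-2*a-1)*((n:ℝ)-2+b))
                + (p n 1 * (((n:ℝ)-2+b)*((n:ℝ)-1+b)*((n:ℝ)+b)))
                  * (((n:ℝ)+1-2+a)*((n:ℝ)+1+b)) := by
            rw [hrec, hdiv _ hD.ne']
            ring
          rw [e1]
          have t1 : (p (n+1) 0 * (((n:ℝ)-1+b)*((n:ℝ)+b)*((n:ℝ)+1+b)))
                  * ((a*((n:ℝ)+1)+1-2*a-1)*((n:ℝ)-2+b))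
              ≤ ((P*r^(n-1)) * (((n:ℝ)-1+b)*((n:ℝ)+b)*((n:ℝ)+1+b)))
                  * ((a*((n:ℝ)+1)+1-2*a-1)*((n:ℝ)-2+b)) := by
            apply mul_le_mul_of_nonneg_right
              (mul_le_mul_of_nonneg_right hpa.2 hQ4.le)
              (mul_nonneg hA0 hw0.le)
          have t2 : (p n 1 * (((n:ℝ)-2+b)*((n:ℝ)-1+b)*((n:ℝ)+b)))
                  * (((n:ℝ)+1-2+a)*((n:ℝ)+1+b))
              ≤ (C * 1) * (((n:ℝ)+1-2+a)*((n:ℝ)+1+b)) := by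
            apply mul_le_mul_of_nonneg_right hpb.2 (mul_nonneg hB0 hv0.le)
          calc _ ≤ ((P*r^(n-1)) * (((n:ℝ)-1+b)*((n:ℝ)+b)*((n:ℝ)+1+b)))
                  * ((a*((n:ℝ)+1)+1-2*a-1)*((n:ℝ)-2+b))
                + (C * 1) * (((n:ℝ)+1-2+a)*((n:ℝ)+1+b)) := add_le_add t1 t2
            _ ≤ C * 1 * ((((n:ℝ)+1)*(1+a)+1-1-a) * ((n:ℝ)-2+b)) := by linarith [hkm]
      | succ k hk ihk =>
        -- k+1 ≥ 2
        have h3 : 3 ≤ n + 1 := by omega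
        have hrec := hlk (n+1) (k+1) h3 (by omega)
        rw [Nat.add_sub_cancel] at hrec
        push_cast at hrec
        have hM : (2:ℝ) ≤ (n:ℝ) := by exact_mod_cast hn
        have hK : (1:ℝ) ≤ (k:ℝ) := by exact_mod_cast hk
        have hna : (0:ℝ) ≤ a*(n:ℝ) := mul_nonneg ha.le (by linarith)
        have hD : (0:ℝ) < ((n:ℝ)+1)*(1+a)+((k:ℝ)+1)-1-a := by nlinarith
        have hA0 : (0:ℝ) ≤ a*((n:ℝ)+1)+((k:ℝ)+1)-2*a-1 := by nlinarith
        have hB0 : (0:ℝ) ≤ (n:ℝ)+1-2+a := by linarith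
        have hpa := ihk
        push_cast at hpa
        have hpb := ihn (k+1) (by omega)
        push_cast at hpb
        have hw0 : (0:ℝ) < (n:ℝ) - 2 + b := by linarith
        have hv0 : (0:ℝ) < (n:ℝ) + 1 + b := by linarith
        have hQ4 : (0:ℝ) < ((n:ℝ)-1+b)*((n:ℝ)+b)*((n:ℝ)+1+b) := by
          apply mul_pos (mul_pos (by linarith) (by linarith)) hv0
        have hkm := keyMain (n:ℝ) ((k:ℝ)+1) hM (by linarith)
        constructor
        · rw [hrec]
          exact add_nonneg (mul_nonneg hpa.1 (div_nonneg hA0 hD.le))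
            (mul_nonneg hpb.1 (div_nonneg hB0 hD.le))
        · push_cast
          refine le_of_mul_le_mul_right ?_ (mul_pos hD hw0)
          have e1 : p (n+1) (k+1) * (((n:ℝ)+1-2+b)*((n:ℝ)+1-1+b)*((n:ℝ)+1+b))
              * ((((n:ℝ)+1)*(1+a)+((k:ℝ)+1)-1-a) * ((n:ℝ)-2+b))
              = (p (n+1) k * (((n:ℝ)+1-2+b)*((n:ℝ)+1-1+b)*((n:ℝ)+1+b)))
                  * ((a*((n:ℝ)+1)+((k:ℝ)+1)-2*a-1)*((n:ℝ)-2+b))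
                + (p n (k+1) * (((n:ℝ)-2+b)*((n:ℝ)-1+b)*((n:ℝ)+b)))
                  * (((n:ℝ)+1-2+a)*((n:ℝ)+1+b)) := by
            rw [hrec, hdiv _ hD.ne']
            ring
          rw [e1]
          have hQ4' : (0:ℝ) < ((n:ℝ)+1-2+b)*((n:ℝ)+1-1+b)*((n:ℝ)+1+b) := by
            apply mul_pos (mul_pos (by linarith) (by linarith)) hv0
          have t1 : (p (n+1) k * (((n:ℝ)+1-2+b)*((n:ℝ)+1-1+b)*((n:ℝ)+1+b)))
                  * ((a*((n:ℝ)+1)+((k:ℝ)+1)-2*a-1)*((n:ℝ)-2+b))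
              ≤ (C * (k:ℝ)) * ((a*((n:ℝ)+1)+((k:ℝ)+1)-2*a-1)*((n:ℝ)-2+b)) := by
            apply mul_le_mul_of_nonneg_right hpa.2 (mul_nonneg hA0 hw0.le)
          have t2 : (p n (k+1) * (((n:ℝ)-2+b)*((n:ℝ)-1+b)*((n:ℝ)+b)))
                  * (((n:ℝ)+1-2+a)*((n:ℝ)+1+b))
              ≤ (C * ((k:ℝ)+1)) * (((n:ℝ)+1-2+a)*((n:ℝ)+1+b)) := by
            apply mul_le_mul_of_nonneg_right hpb.2 (mul_nonneg hB0 hv0.le)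
          calc _ ≤ (C * (k:ℝ)) * ((a*((n:ℝ)+1)+((k:ℝ)+1)-2*a-1)*((n:ℝ)-2+b))
                + (C * ((k:ℝ)+1)) * (((n:ℝ)+1-2+a)*((n:ℝ)+1+b)) := add_le_add t1 t2
            _ = C * ( (((k:ℝ)+1)-1)*((a*((n:ℝ)+1)+((k:ℝ)+1)-2*a-1)*((n:ℝ)-2+b))
                + ((k:ℝ)+1)*((((n:ℝ))-1+a)*((n:ℝ)+1+b)) ) := by ring
            _ ≤ C * ( ((k:ℝ)+1)*((((n:ℝ)+1)*(1+a)+((k:ℝ)+1)-1-a)*((n:ℝ)-2+b)) ) := by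
                apply mul_le_mul_of_nonneg_left hkm hC0.le
            _ = C * ((k:ℝ)+1) * ((((n:ℝ)+1)*(1+a)+((k:ℝ)+1)-1-a) * ((n:ℝ)-2+b)) := by ring
  -- conclude
  refine ⟨C, fun l k hl hk => ?_⟩
  obtain ⟨h0, h1⟩ := main l hl k hk
  have hl2 : (2:ℝ) ≤ (l:ℝ) := by exact_mod_cast hl
  have hl3 : (0:ℝ) < (l:ℝ)^3 := by positivity
  have hQ : (l:ℝ)^3 ≤ ((l:ℝ)-2+b)*((l:ℝ)-1+b)*((l:ℝ)+b) := by
    have c1 : (l:ℝ)*(l:ℝ) ≤ ((l:ℝ)-2+b)*((l:ℝ)-1+b) :=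
      mul_le_mul (by linarith) (by linarith) (by linarith) (by linarith)
    have c2 : ((l:ℝ)*(l:ℝ))*(l:ℝ) ≤ (((l:ℝ)-2+b)*((l:ℝ)-1+b))*((l:ℝ)+b) :=
      mul_le_mul c1 (by linarith) (by linarith)
        (mul_nonneg (by linarith) (by linarith))
    calc (l:ℝ)^3 = ((l:ℝ)*(l:ℝ))*(l:ℝ) := by ring
      _ ≤ _ := c2
  rw [le_div_iff₀ hl3]
  calc p l k * (l:ℝ)^3 ≤ p l k * (((l:ℝ)-2+b)*((l:ℝ)-1+b)*((l:ℝ)+b)) :=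
        mul_le_mul_of_nonneg_left hQ h0
    _ ≤ C * (k:ℝ) := h1
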